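/- Let f : ℝ → ℝ → ℝ be a measurable function such that each μ_n has finite second moment (e.g. because each μ_n is compactly supported). Then for every n, writing a₁, a₂, a₃, a₄ for independent random variables each with law μ_n, the variance satisfies V_{n+1} = 2·V_n + (1/2)·E[(f(a₁,a₂) − f(a₃,a₄))²]. In particular V_{n+1} ≥ 2·V_n for all n, and hence V_n ≥ 2ⁿ·V₀ with V₀ = 1/4. -/

import Mathlib

open MeasureTheory Filter

/-- The recursively defined sequence of measures: `μ₀ = (δ₁ + δ₂)/2` and `μ_{n+1}` is the
pushforward of `μ_n ⊗ μ_n ⊗ μ_n ⊗ μ_n` under `(a,b,c,d) ↦ a + b + f c d`. -/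
noncomputable def mu (f : ℝ → ℝ → ℝ) : ℕ → Measure ℝ
  | 0 => (2 : ENNReal)⁻¹ • Measure.dirac 1 + (2 : ENNReal)⁻¹ • Measure.dirac 2
  | n + 1 =>
      Measure.map (fun p : ℝ × ℝ × ℝ × ℝ => p.1 + p.2.1 + f p.2.2.1 p.2.2.2)
        ((mu f n).prod ((mu f n).prod ((mu f n).prod (mu f n))))

/-- The mean of `μ_n`. -/
noncomputable def En (f : ℝ → ℝ → ℝ) (n : ℕ) : ℝ := ∫ x, x ∂(mu f n)

/-- The variance of `μ_n`. -/
noncomputable def Vn (f : ℝ → ℝ → ℝ) (n : ℕ) : ℝ := ∫ x, (x - En f n) ^ 2 ∂(mu f n)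

section Helpers

open ProbabilityTheory
set_option maxHeartbeats 1000000

variable {α β : Type*} [MeasurableSpace α] [MeasurableSpace β]

lemma mpFst (μ : Measure α) (ν : Measure β) [IsProbabilityMeasure μ] [IsProbabilityMeasure ν] :
    MeasurePreserving Prod.fst (μ.prod ν) μ :=
  ⟨measurable_fst, by simp⟩

lemma mpSnd (μ : Measure α) (ν : Measure β) [IsProbabilityMeasure μ] [IsProbabilityMeasure ν] :
    MeasurePreserving Prod.snd (μ.prod ν) ν :=
  ⟨measurable_snd, by simp⟩

lemma indepFstSnd (μ : Measure α) (ν : Measure β) [IsProbabilityMeasure μ] [IsProbabilityMeasure ν] :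
    IndepFun Prod.fst Prod.snd (μ.prod ν) := by
  rw [indepFun_iff_map_prod_eq_prod_map_map measurable_fst.aemeasurable measurable_snd.aemeasurable]
  simp [Measure.map_id]

lemma intComp {μ : Measure α} {ν : Measure β} {φ : α → β} (hφ : MeasurePreserving φ μ ν)
    {g : β → ℝ} (hg : AEStronglyMeasurable g ν) : ∫ x, g (φ x) ∂μ = ∫ y, g y ∂ν := by
  rw [← hφ.map_eq] at hg ⊢
  exact (integral_map hφ.measurable.aemeasurable hg).symm

lemma varComp {μ : Measure α} {ν : Measure β} [IsProbabilityMeasure μ] [IsProbabilityMeasure ν]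
    {φ : α → β} (hφ : MeasurePreserving φ μ ν) {X : β → ℝ} (hXm : AEStronglyMeasurable X ν)
    (hX : MemLp X 2 ν) : variance (X ∘ φ) μ = variance X ν := by
  rw [variance_eq_sub (hX.comp_measurePreserving hφ), variance_eq_sub hX]
  have h1 : ∫ x, (X ∘ φ) x ∂μ = ∫ y, X y ∂ν := intComp hφ hXm
  have h2 : ∫ x, ((X ∘ φ) ^ 2) x ∂μ = ∫ y, (X ^ 2) y ∂ν := intComp hφ (hXm.pow 2)
  rw [show (fun x => ((X ∘ φ) ^ 2) x) = fun x => (X ^ 2) (φ x) from rfl] at h2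
  rw [h1, show (fun x => ((X ∘ φ) ^ 2) x) = fun x => (X ^ 2) (φ x) from rfl, h2]


lemma g_meas {f : ℝ → ℝ → ℝ} (hf : Measurable (fun p : ℝ × ℝ => f p.1 p.2)) :
    Measurable (fun p : ℝ × ℝ × ℝ × ℝ => p.1 + p.2.1 + f p.2.2.1 p.2.2.2) :=
  (measurable_fst.add (measurable_fst.comp measurable_snd)).add
    (hf.comp ((measurable_snd.comp measurable_snd)))

lemma mu_prob (f : ℝ → ℝ → ℝ) (hf : Measurable (fun p : ℝ × ℝ => f p.1 p.2)) :
    ∀ n, IsProbabilityMeasure (mu f n)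
  | 0 => by
      constructor
      simp [mu, ENNReal.inv_two_add_inv_two]
  | n + 1 => by
      haveI := mu_prob f hf n
      rw [mu]
      exact Measure.isProbabilityMeasure_map (g_meas hf).aemeasurable


lemma intg_dirac {g : ℝ → ℝ} (hg : Measurable g) (a : ℝ) : Integrable g (Measure.dirac a) := by
  refine ⟨hg.aestronglyMeasurable, ?_⟩
  rw [HasFiniteIntegral, lintegral_dirac' _ hg.enorm]
  exact ENNReal.coe_lt_top

lemma int_mu0 (f : ℝ → ℝ → ℝ) {g : ℝ → ℝ} (hg : Measurable g) :
    ∫ x, g x ∂(mu f 0) = (g 1 + g 2) / 2 := by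
  rw [mu, integral_add_measure ((intg_dirac hg 1).smul_measure (by norm_num))
      ((intg_dirac hg 2).smul_measure (by norm_num)),
    integral_smul_measure, integral_smul_measure, integral_dirac, integral_dirac]
  simp [ENNReal.toReal_inv]
  ring

lemma En0 (f : ℝ → ℝ → ℝ) : En f 0 = 3 / 2 := by
  rw [En, int_mu0 f (g := fun x => x) measurable_id]
  norm_num

lemma V0 (f : ℝ → ℝ → ℝ) : Vn f 0 = 1 / 4 := by
  rw [Vn, int_mu0 f (g := fun x => (x - En f 0) ^ 2)
    ((measurable_id.sub measurable_const).pow measurable_const), En0]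
  norm_num

lemma key (f : ℝ → ℝ → ℝ) (hf : Measurable (fun p : ℝ × ℝ => f p.1 p.2))
    (hmom : ∀ n : ℕ, Integrable (fun x : ℝ => x ^ 2) (mu f n)) (n : ℕ) :
    Vn f (n + 1) = 2 * Vn f n +
        (1 / 2) * ∫ p : ℝ × ℝ × ℝ × ℝ, (f p.1 p.2.1 - f p.2.2.1 p.2.2.2) ^ 2
          ∂((mu f n).prod ((mu f n).prod ((mu f n).prod (mu f n)))) := by
  haveI := mu_prob f hf n
  haveI := mu_prob f hf (n + 1)
  set μ := mu f n with hμ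
  set m := μ.prod μ with hm
  set ρ := m.prod m with hρ
  set π := μ.prod (μ.prod (μ.prod μ)) with hπ
  set S : ℝ × ℝ → ℝ := fun p => p.1 + p.2 with hS
  set W : ℝ × ℝ → ℝ := fun p => f p.1 p.2 with hW
  set T : (ℝ × ℝ) × (ℝ × ℝ) → ℝ := fun q => S q.1 + W q.2 with hT
  have hSm : Measurable S := measurable_fst.add measurable_snd
  have hTm : Measurable T := (hSm.comp measurable_fst).add (hf.comp measurable_snd)
  have hid2 : MemLp (fun x : ℝ => x) 2 μ :=
    (memLp_two_iff_integrable_sq measurable_id.aestronglyMeasurable).2 (hmom n)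
  have hr : MeasurePreserving
      (⇑(MeasurableEquiv.prodAssoc : (ℝ × ℝ) × (ℝ × ℝ) ≃ᵐ ℝ × ℝ × ℝ × ℝ)) ρ π :=
    measurePreserving_prodAssoc μ μ (μ.prod μ)
  have hmap : mu f (n + 1) = Measure.map T ρ := by
    rw [mu, ← hπ, ← hr.map_eq,
      Measure.map_map (g_meas hf) (MeasurableEquiv.measurable _)]
    rfl
  have hT2 : MemLp T 2 ρ := by
    have h1 : MemLp (fun x : ℝ => x) 2 (mu f (n + 1)) :=
      (memLp_two_iff_integrable_sq measurable_id.aestronglyMeasurable).2 (hmom (n + 1))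
    rw [hmap] at h1
    exact (memLp_map_measure_iff measurable_id.aestronglyMeasurable hTm.aemeasurable).1 h1
  have hfst2 : MemLp (Prod.fst : ℝ × ℝ → ℝ) 2 m := hid2.comp_measurePreserving (mpFst μ μ)
  have hsnd2 : MemLp (Prod.snd : ℝ × ℝ → ℝ) 2 m := hid2.comp_measurePreserving (mpSnd μ μ)
  have hS2 : MemLp S 2 m := hfst2.add hsnd2
  have hSf2 : MemLp (S ∘ Prod.fst) 2 ρ := hS2.comp_measurePreserving (mpFst m m)
  have hWs2 : MemLp (W ∘ Prod.snd) 2 ρ := by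
    have he : (W ∘ Prod.snd : (ℝ × ℝ) × (ℝ × ℝ) → ℝ) = T - S ∘ Prod.fst := by
      ext q; simp [hT]
    rw [he]; exact hT2.sub hSf2
  have hW2 : MemLp W 2 m := by
    have h := (memLp_map_measure_iff hf.aestronglyMeasurable measurable_snd.aemeasurable).2 hWs2
    rwa [(mpSnd m m).map_eq] at h
  have En1 : En f (n + 1) = ∫ q, T q ∂ρ := by
    rw [En, hmap, integral_map (f := fun x => x) hTm.aemeasurable
      measurable_id.aestronglyMeasurable]
  have Vn1 : Vn f (n + 1) = variance T ρ := by
    rw [Vn, hmap, integral_map (f := fun x => (x - En f (n + 1)) ^ 2) hTm.aemeasurable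
      ((measurable_id.sub measurable_const).pow measurable_const).aestronglyMeasurable,
      variance_eq_integral hT2.1.aemeasurable, En1]
  have hind : IndepFun (S ∘ Prod.fst) (W ∘ Prod.snd) ρ := (indepFstSnd m m).comp hSm hf
  have varT : variance T ρ = variance S m + variance W m := by
    have h := hind.variance_add hSf2 hWs2
    rw [show (S ∘ Prod.fst) + (W ∘ Prod.snd) = T from rfl] at h
    rw [h, varComp (mpFst m m) hSm.aestronglyMeasurable hS2,
      varComp (mpSnd m m) hf.aestronglyMeasurable hW2]
  have vid : variance (fun x : ℝ => x) μ = Vn f n := by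
    rw [variance_eq_integral hid2.1.aemeasurable, Vn]
    rfl
  have vS : variance S m = 2 * Vn f n := by
    have h := (indepFstSnd μ μ).variance_add hfst2 hsnd2
    rw [show (Prod.fst + Prod.snd : ℝ × ℝ → ℝ) = S from rfl] at h
    have v1 : variance (Prod.fst : ℝ × ℝ → ℝ) m = variance (fun x : ℝ => x) μ :=
      varComp (mpFst μ μ) measurable_id.aestronglyMeasurable hid2
    have v2 : variance (Prod.snd : ℝ × ℝ → ℝ) m = variance (fun x : ℝ => x) μ :=
      varComp (mpSnd μ μ) measurable_id.aestronglyMeasurable hid2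
    rw [h, v1, v2, vid]
    ring
  -- the displacement integral
  have hFm : Measurable (fun p : ℝ × ℝ × ℝ × ℝ => (f p.1 p.2.1 - f p.2.2.1 p.2.2.2) ^ 2) :=
    (((hf.comp (measurable_fst.prodMk (measurable_fst.comp measurable_snd))).sub
      (hf.comp (measurable_snd.comp measurable_snd))).pow measurable_const)
  have hA2 : MemLp (W ∘ Prod.fst) 2 ρ := hW2.comp_measurePreserving (mpFst m m)
  have hAB : IndepFun (W ∘ Prod.fst) (W ∘ Prod.snd) ρ := (indepFstSnd m m).comp hf hf
  have intA : Integrable (W ∘ Prod.fst) ρ := hA2.integrable one_le_two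
  have intB : Integrable (W ∘ Prod.snd) ρ := hWs2.integrable one_le_two
  have intA2 : Integrable (fun q => (W ∘ Prod.fst) q ^ 2) ρ := hA2.integrable_sq
  have intB2 : Integrable (fun q => (W ∘ Prod.snd) q ^ 2) ρ := hWs2.integrable_sq
  have intAB : Integrable ((W ∘ Prod.fst) * (W ∘ Prod.snd)) ρ := hAB.integrable_mul intA intB
  have Iρ : (∫ p : ℝ × ℝ × ℝ × ℝ, (f p.1 p.2.1 - f p.2.2.1 p.2.2.2) ^ 2 ∂π)
      = ∫ q, (W q.1 - W q.2) ^ 2 ∂ρ := by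
    rw [← hr.map_eq, integral_map hr.measurable.aemeasurable hFm.aestronglyMeasurable]
    rfl
  have Ival : (∫ q, (W q.1 - W q.2) ^ 2 ∂ρ) = 2 * variance W m := by
    have intA2' : Integrable (fun q : (ℝ × ℝ) × (ℝ × ℝ) => W q.1 ^ 2) ρ := intA2
    have intB2' : Integrable (fun q : (ℝ × ℝ) × (ℝ × ℝ) => W q.2 ^ 2) ρ := intB2
    have intAB' : Integrable (fun q : (ℝ × ℝ) × (ℝ × ℝ) => W q.1 * W q.2) ρ := intAB
    have e1 : (∫ q : (ℝ × ℝ) × (ℝ × ℝ), W q.1 ^ 2 ∂ρ) = ∫ p, W p ^ 2 ∂m :=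
      intComp (mpFst m m) (hf.pow measurable_const).aestronglyMeasurable
    have e2 : (∫ q : (ℝ × ℝ) × (ℝ × ℝ), W q.2 ^ 2 ∂ρ) = ∫ p, W p ^ 2 ∂m :=
      intComp (mpSnd m m) (hf.pow measurable_const).aestronglyMeasurable
    have e3 : (∫ q : (ℝ × ℝ) × (ℝ × ℝ), W q.1 ∂ρ) = ∫ p, W p ∂m :=
      intComp (mpFst m m) hf.aestronglyMeasurable
    have e4 : (∫ q : (ℝ × ℝ) × (ℝ × ℝ), W q.2 ∂ρ) = ∫ p, W p ∂m :=
      intComp (mpSnd m m) hf.aestronglyMeasurable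
    have h' : (∫ q : (ℝ × ℝ) × (ℝ × ℝ), W q.1 * W q.2 ∂ρ)
        = (∫ q : (ℝ × ℝ) × (ℝ × ℝ), W q.1 ∂ρ) * ∫ q : (ℝ × ℝ) × (ℝ × ℝ), W q.2 ∂ρ :=
      hAB.integral_fun_mul_eq_mul_integral intA.1 intB.1
    have hv : variance W m = (∫ p, W p ^ 2 ∂m) - (∫ p, W p ∂m) ^ 2 := variance_eq_sub hW2
    rw [show (fun q : (ℝ × ℝ) × (ℝ × ℝ) => (W q.1 - W q.2) ^ 2)
        = fun q => (W q.1 ^ 2 + W q.2 ^ 2) - 2 * (W q.1 * W q.2) from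
      funext fun q => by ring]
    have intAdd : Integrable (fun q : (ℝ × ℝ) × (ℝ × ℝ) => W q.1 ^ 2 + W q.2 ^ 2) ρ :=
      intA2'.add intB2'
    have intCM : Integrable (fun q : (ℝ × ℝ) × (ℝ × ℝ) => 2 * (W q.1 * W q.2)) ρ :=
      intAB'.const_mul 2
    rw [integral_sub intAdd intCM, integral_add intA2' intB2',
      integral_const_mul, h', e1, e2, e3, e4, hv]
    ring
  rw [Vn1, varT, vS, show (∫ p : ℝ × ℝ × ℝ × ℝ, (f p.1 p.2.1 - f p.2.2.1 p.2.2.2) ^ 2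
      ∂((mu f n).prod ((mu f n).prod ((mu f n).prod (mu f n))))) = ∫ q, (W q.1 - W q.2) ^ 2 ∂ρ
      from Iρ, Ival]
  ring

end Helpers

theorem stmt7 (f : ℝ → ℝ → ℝ)
    (hf : Measurable (fun p : ℝ × ℝ => f p.1 p.2))
    (hmom : ∀ n : ℕ, Integrable (fun x : ℝ => x ^ 2) (mu f n)) :
    (∀ n : ℕ, Vn f (n + 1) = 2 * Vn f n +
        (1 / 2) * ∫ p : ℝ × ℝ × ℝ × ℝ, (f p.1 p.2.1 - f p.2.2.1 p.2.2.2) ^ 2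
          ∂((mu f n).prod ((mu f n).prod ((mu f n).prod (mu f n))))) ∧
    (∀ n : ℕ, 2 * Vn f n ≤ Vn f (n + 1)) ∧
    Vn f 0 = 1 / 4 ∧
    (∀ n : ℕ, 2 ^ n * Vn f 0 ≤ Vn f n) := by
  have hmono : ∀ n : ℕ, 2 * Vn f n ≤ Vn f (n + 1) := by
    intro n
    have hk := key f hf hmom n
    have hI : 0 ≤ ∫ p : ℝ × ℝ × ℝ × ℝ, (f p.1 p.2.1 - f p.2.2.1 p.2.2.2) ^ 2
        ∂((mu f n).prod ((mu f n).prod ((mu f n).prod (mu f n)))) :=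
      integral_nonneg fun p => sq_nonneg _
    nlinarith
  refine ⟨key f hf hmom, hmono, V0 f, ?_⟩
  intro n
  induction n with
  | zero => simp
  | succ k ih =>
      calc (2 : ℝ) ^ (k + 1) * Vn f 0 = 2 * (2 ^ k * Vn f 0) := by ring
        _ ≤ 2 * Vn f k := by linarith
        _ ≤ Vn f (k + 1) := hmono k
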